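/- Let n ≥ 1 be an integer, k ∈ [0,1), λ₀ > 0, R > 0 and q > −1. Then there exists a constant B₀ > 0, depending only on n, λ₀, q, R, k, such that for all t ≥ s ≥ 1 and all x ∈ ℝⁿ with |x| ≤ A_k(s) + R: ξ_q(t,s,x;k) ≥ B₀ ⟨A_k(s)⟩^{−q−1}. -/

import Mathlib

open MeasureTheory Real Set
open scoped ENNReal NNReal

/-- `φ_k(t) = t^(1-k)/(1-k)`. -/
noncomputable def phik (k t : ℝ) : ℝ := t ^ (1 - k) / (1 - k)

/-- `A_k(t) = φ_k(t) - φ_k(1)`. -/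
noncomputable def Ak (k t : ℝ) : ℝ := phik k t - phik k 1

/-- The Yordanov–Zhang function: `cosh x` for `n = 1`, and the integral of `e^(x·ω)`
over the unit sphere (with surface measure) for `n ≥ 2`. -/
noncomputable def YZphi (n : ℕ) (x : EuclideanSpace ℝ (Fin n)) : ℝ :=
  if n = 1 then Real.cosh ‖x‖
  else ∫ ω in Metric.sphere (0 : EuclideanSpace ℝ (Fin n)) 1,
    Real.exp ((inner ℝ x ω : ℝ)) ∂(MeasureTheory.Measure.hausdorffMeasure ((n:ℝ) - 1))

/-- `sinh y / y`, interpreted as `1` at `y = 0`. -/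
noncomputable def sinhc (y : ℝ) : ℝ := if y = 0 then 1 else Real.sinh y / y

/-- The auxiliary function `ξ_q(t,s,x;k)`. -/
noncomputable def xiq (n : ℕ) (lam0 R k q : ℝ) (t s : ℝ) (x : EuclideanSpace ℝ (Fin n)) : ℝ :=
  ∫ lam in (0:ℝ)..lam0,
    Real.exp (-(lam * (Ak k t + R))) * Real.cosh (lam * (phik k t - phik k s)) *
      YZphi n (lam • x) * lam ^ q

/-- The auxiliary function `η_q(t,s,x;k)`. -/
noncomputable def etaq (n : ℕ) (lam0 R k q : ℝ) (t s : ℝ) (x : EuclideanSpace ℝ (Fin n)) : ℝ :=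
  (s * t) ^ (k / 2) *
    ∫ lam in (0:ℝ)..lam0,
      Real.exp (-(lam * (Ak k t + R))) * sinhc (lam * (phik k t - phik k s)) *
        YZphi n (lam • x) * lam ^ q

noncomputable def ins (m : ℕ) (i : Fin (m+1)) (x : ℝ) (u : EuclideanSpace ℝ (Fin m)) :
    EuclideanSpace ℝ (Fin (m+1)) :=
  (WithLp.equiv 2 _).symm (i.insertNth x (WithLp.equiv 2 _ u))

lemma ins_apply_same (m : ℕ) (i : Fin (m+1)) (x : ℝ) (u : EuclideanSpace ℝ (Fin m)) :
    ins m i x u i = x := by simp [ins]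

lemma ins_apply_succAbove (m : ℕ) (i : Fin (m+1)) (x : ℝ) (u : EuclideanSpace ℝ (Fin m))
    (j : Fin m) : ins m i x u (i.succAbove j) = u j := by simp [ins]

lemma norm_ins_sq (m : ℕ) (i : Fin (m+1)) (x : ℝ) (u : EuclideanSpace ℝ (Fin m)) :
    ‖ins m i x u‖ ^ 2 = x^2 + ‖u‖^2 := by
  rw [EuclideanSpace.norm_eq, EuclideanSpace.norm_eq,
    Real.sq_sqrt (by positivity), Real.sq_sqrt (by positivity),
    Fin.sum_univ_succAbove _ i]
  simp [ins_apply_same, ins_apply_succAbove]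

lemma isometry_ins (m : ℕ) (i : Fin (m+1)) (x : ℝ) : Isometry (ins m i x) := by
  intro u v
  rw [edist_dist, edist_dist]
  congr 1
  rw [EuclideanSpace.dist_eq, EuclideanSpace.dist_eq, Fin.sum_univ_succAbove _ i]
  simp [ins_apply_same, ins_apply_succAbove]

lemma radial_lip {E : Type*} [NormedAddCommGroup E] [NormedSpace ℝ E] :
    LipschitzOnWith 2 (fun x : E => ‖x‖⁻¹ • x) {x : E | 1 ≤ ‖x‖} := by
  rw [lipschitzOnWith_iff_dist_le_mul]
  intro x hx y hy
  simp only [Set.mem_setOf_eq] at hx hy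
  have hx0 : (0:ℝ) < ‖x‖ := lt_of_lt_of_le one_pos hx
  have hy0 : (0:ℝ) < ‖y‖ := lt_of_lt_of_le one_pos hy
  rw [dist_eq_norm, dist_eq_norm]
  have key : ‖x‖⁻¹ • x - ‖y‖⁻¹ • y = ‖x‖⁻¹ • (x - y) + (‖x‖⁻¹ - ‖y‖⁻¹) • y := by
    module
  have h1 : ‖x‖⁻¹ * ‖x - y‖ ≤ ‖x - y‖ := by
    have : ‖x‖⁻¹ ≤ 1 := inv_le_one_of_one_le₀ hx
    calc ‖x‖⁻¹ * ‖x - y‖ ≤ 1 * ‖x - y‖ := by gcongr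
      _ = ‖x - y‖ := one_mul _
  have h2 : |‖x‖⁻¹ - ‖y‖⁻¹| * ‖y‖ ≤ ‖x - y‖ := by
    have e : (‖x‖⁻¹ - ‖y‖⁻¹) * ‖y‖ = (‖y‖ - ‖x‖) / ‖x‖ := by field_simp
    rw [show |‖x‖⁻¹ - ‖y‖⁻¹| * ‖y‖ = |(‖x‖⁻¹ - ‖y‖⁻¹) * ‖y‖| from by
      rw [abs_mul, abs_of_pos hy0], e, abs_div, abs_of_pos hx0]
    have hstep : |‖y‖ - ‖x‖| ≤ ‖x - y‖ := by
      rw [norm_sub_rev]; exact abs_norm_sub_norm_le y x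
    calc |‖y‖ - ‖x‖| / ‖x‖ ≤ |‖y‖ - ‖x‖| := div_le_self (abs_nonneg _) hx
      _ ≤ ‖x - y‖ := hstep
  calc ‖‖x‖⁻¹ • x - ‖y‖⁻¹ • y‖ = ‖‖x‖⁻¹ • (x - y) + (‖x‖⁻¹ - ‖y‖⁻¹) • y‖ := by rw [key]
    _ ≤ ‖‖x‖⁻¹ • (x - y)‖ + ‖(‖x‖⁻¹ - ‖y‖⁻¹) • y‖ := norm_add_le _ _
    _ = ‖x‖⁻¹ * ‖x - y‖ + |‖x‖⁻¹ - ‖y‖⁻¹| * ‖y‖ := by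
        rw [norm_smul, norm_smul, Real.norm_eq_abs, Real.norm_eq_abs,
          abs_of_pos (inv_pos.mpr hx0)]
    _ ≤ ‖x - y‖ + ‖x - y‖ := add_le_add h1 h2
    _ = (2:ℝ≥0) * ‖x - y‖ := by push_cast; ring

lemma lip_symm (m : ℕ) :
    LipschitzWith ((m : ℝ≥0) ^ ((2:ℝ)⁻¹)) (WithLp.equiv 2 (Fin m → ℝ)).symm := by
  have h : AntilipschitzWith _ (WithLp.equiv 2 (Fin m → ℝ)) :=
    PiLp.antilipschitzWith_ofLp 2 (fun _ : Fin m => ℝ)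
  have := h.to_rightInverse (WithLp.equiv 2 (Fin m → ℝ)).right_inv
  simpa using this

lemma hm_closedBall_lt_top (m : ℕ) (r : ℝ) :
    μH[(m:ℝ)] (Metric.closedBall (0 : EuclideanSpace ℝ (Fin m)) r) < ⊤ := by
  set e := WithLp.equiv 2 (Fin m → ℝ)
  have himg : Metric.closedBall (0 : EuclideanSpace ℝ (Fin m)) r
      = e.symm '' (e '' Metric.closedBall 0 r) := by
    rw [← Set.image_comp]; simp
  have hle := (lip_symm m).hausdorffMeasure_image_le (d := (m:ℝ)) (by positivity)
      (e '' Metric.closedBall 0 r)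
  rw [himg]
  refine lt_of_le_of_lt hle ?_
  have hpi : (μH[(m:ℝ)] : Measure (Fin m → ℝ)) = volume := by
    have := hausdorffMeasure_pi_real (ι := Fin m)
    simpa using this
  have hsub : e '' Metric.closedBall 0 r ⊆ Metric.closedBall (0 : Fin m → ℝ) r := by
    rintro - ⟨x, hx, rfl⟩
    have hd := (PiLp.lipschitzWith_ofLp 2 (fun _ : Fin m => ℝ) :
      LipschitzWith 1 (WithLp.equiv 2 (Fin m → ℝ))).dist_le_mul x 0
    simp only [NNReal.coe_one, one_mul] at hd
    have hx' : dist x 0 ≤ r := Metric.mem_closedBall.mp hx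
    have h0 : (e 0 : Fin m → ℝ) = 0 := rfl
    exact Metric.mem_closedBall.mpr (by rw [← h0]; exact hd.trans hx')
  refine ENNReal.mul_lt_top (ENNReal.rpow_lt_top_of_nonneg (by positivity) ENNReal.coe_ne_top) ?_
  rw [hpi]
  exact lt_of_le_of_lt (measure_mono hsub) (measure_closedBall_lt_top)


lemma hm_closedBall_pos (m : ℕ) :
    0 < μH[(m:ℝ)] (Metric.closedBall (0 : EuclideanSpace ℝ (Fin m)) 1) := by
  set e := WithLp.equiv 2 (Fin m → ℝ)
  set cube : Set (Fin m → ℝ) := Set.pi Set.univ (fun _ => Icc (0:ℝ) ((m:ℝ)+1)⁻¹) with hcube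
  have hsub : cube ⊆ e '' Metric.closedBall (0 : EuclideanSpace ℝ (Fin m)) 1 := by
    intro x hx
    refine ⟨e.symm x, ?_, e.apply_symm_apply x⟩
    rw [Metric.mem_closedBall, dist_zero_right, EuclideanSpace.norm_eq]
    have hb : ∀ j : Fin m, ‖(e.symm x) j‖ ^ 2 ≤ (((m:ℝ)+1)⁻¹) ^ 2 := by
      intro j
      have hj := hx j (Set.mem_univ j)
      have h1 : |x j| ≤ ((m:ℝ)+1)⁻¹ := abs_le.mpr ⟨le_trans (by
        rw [neg_nonpos]; positivity) hj.1, hj.2⟩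
      have hx2 : (e.symm x) j = x j := rfl
      rw [hx2, Real.norm_eq_abs]
      exact pow_le_pow_left₀ (abs_nonneg _) h1 2
    have hsum : (∑ j : Fin m, ‖(e.symm x) j‖ ^ 2) ≤ 1 := by
      calc (∑ j : Fin m, ‖(e.symm x) j‖ ^ 2) ≤ ∑ _j : Fin m, (((m:ℝ)+1)⁻¹) ^ 2 :=
            Finset.sum_le_sum (fun j _ => hb j)
        _ = (m:ℝ) * (((m:ℝ)+1)⁻¹) ^ 2 := by
            rw [Finset.sum_const, Finset.card_univ, Fintype.card_fin, nsmul_eq_mul]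
        _ ≤ 1 := by
            have hm0 : (0:ℝ) ≤ (m:ℝ) := Nat.cast_nonneg m
            rw [inv_pow, mul_inv_le_iff₀ (by positivity), one_mul]
            nlinarith
    calc √(∑ j : Fin m, ‖(e.symm x) j‖ ^ 2) ≤ √1 := Real.sqrt_le_sqrt hsum
      _ = 1 := Real.sqrt_one
  have hv : 0 < volume cube := by
    rw [hcube, volume_pi_pi]
    simp only [Real.volume_Icc, sub_zero]
    rw [CanonicallyOrderedAdd.prod_pos]
    intro i _
    exact ENNReal.ofReal_pos.mpr (by positivity)
  have hpi : (μH[(m:ℝ)] : Measure (Fin m → ℝ)) = volume := by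
    have := hausdorffMeasure_pi_real (ι := Fin m)
    simpa using this
  have h2 := (PiLp.lipschitzWith_ofLp 2 (fun _ : Fin m => ℝ) :
    LipschitzWith 1 (WithLp.equiv 2 (Fin m → ℝ))).hausdorffMeasure_image_le
    (d := (m:ℝ)) (by positivity) (Metric.closedBall 0 1)
  calc (0:ℝ≥0∞) < volume cube := hv
    _ = μH[(m:ℝ)] cube := by rw [hpi]
    _ ≤ μH[(m:ℝ)] (e '' Metric.closedBall 0 1) := measure_mono hsub
    _ ≤ (1:ℝ≥0∞) ^ (m:ℝ) * μH[(m:ℝ)] (Metric.closedBall (0 : EuclideanSpace ℝ (Fin m)) 1) := by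
        simpa [e] using h2
    _ = μH[(m:ℝ)] (Metric.closedBall (0 : EuclideanSpace ℝ (Fin m)) 1) := by
        rw [ENNReal.one_rpow, one_mul]

noncomputable def projE (m : ℕ) (x : EuclideanSpace ℝ (Fin (m+1))) : EuclideanSpace ℝ (Fin m) :=
  (WithLp.equiv 2 _).symm (fun j => x (Fin.castSucc j))

lemma projE_lip (m : ℕ) : LipschitzWith 1 (projE m) := by
  rw [lipschitzWith_iff_dist_le_mul]
  intro x y
  rw [NNReal.coe_one, one_mul, EuclideanSpace.dist_eq, EuclideanSpace.dist_eq]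
  apply Real.sqrt_le_sqrt
  calc ∑ j : Fin m, dist (projE m x j) (projE m y j) ^ 2
      = ∑ j : Fin m, (fun i : Fin (m+1) => dist (x i) (y i) ^ 2) (Fin.castSucc j) := by
        refine Finset.sum_congr rfl (fun j _ => ?_)
        simp [projE]
    _ ≤ ∑ i : Fin (m+1), dist (x i) (y i) ^ 2 := by
        rw [Fin.sum_univ_castSucc (f := fun i : Fin (m+1) => dist (x i) (y i) ^ 2)]
        have : (0:ℝ) ≤ dist (x (Fin.last m)) (y (Fin.last m)) ^ 2 := sq_nonneg _
        linarith


lemma hm_sphere_pos (m : ℕ) :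
    0 < μH[(m:ℝ)] (Metric.sphere (0 : EuclideanSpace ℝ (Fin (m+1))) 1) := by
  have hsub : Metric.closedBall (0 : EuclideanSpace ℝ (Fin m)) 1
      ⊆ projE m '' Metric.sphere (0 : EuclideanSpace ℝ (Fin (m+1))) 1 := by
    intro u hu
    have hu' : ‖u‖ ≤ 1 := by simpa [Metric.mem_closedBall] using hu
    set w : EuclideanSpace ℝ (Fin (m+1)) := ins m (Fin.last m) (√(1 - ‖u‖^2)) u with hw
    have hnw : ‖w‖ = 1 := by
      have h1 : ‖w‖^2 = (√(1 - ‖u‖^2))^2 + ‖u‖^2 := norm_ins_sq m _ _ _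
      have h2 : (√(1 - ‖u‖^2))^2 = 1 - ‖u‖^2 := Real.sq_sqrt (by nlinarith [norm_nonneg u])
      have : ‖w‖^2 = 1 := by rw [h1, h2]; ring
      nlinarith [norm_nonneg w]
    refine ⟨w, by simpa [Metric.mem_sphere, dist_zero_right] using hnw, ?_⟩
    apply (WithLp.equiv 2 (Fin m → ℝ)).injective
    funext j
    have : projE m w j = w (Fin.castSucc j) := rfl
    have h3 : w (Fin.castSucc j) = u j := by
      rw [hw, ← Fin.succAbove_last]
      exact ins_apply_succAbove m _ _ _ j
    simp only [WithLp.equiv]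
    exact this.trans h3
  have h2 := (projE_lip m).hausdorffMeasure_image_le (d := (m:ℝ)) (by positivity)
    (Metric.sphere (0 : EuclideanSpace ℝ (Fin (m+1))) 1)
  calc (0:ℝ≥0∞) < μH[(m:ℝ)] (Metric.closedBall (0 : EuclideanSpace ℝ (Fin m)) 1) :=
        hm_closedBall_pos m
    _ ≤ μH[(m:ℝ)] (projE m '' Metric.sphere (0 : EuclideanSpace ℝ (Fin (m+1))) 1) :=
        measure_mono hsub
    _ ≤ (1:ℝ≥0∞)^(m:ℝ) * μH[(m:ℝ)] (Metric.sphere (0 : EuclideanSpace ℝ (Fin (m+1))) 1) := by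
        simpa using h2
    _ = μH[(m:ℝ)] (Metric.sphere (0 : EuclideanSpace ℝ (Fin (m+1))) 1) := by
        rw [ENNReal.one_rpow, one_mul]

lemma coord_le_norm {k : ℕ} (x : EuclideanSpace ℝ (Fin k)) (i : Fin k) : |x i| ≤ ‖x‖ := by
  rw [EuclideanSpace.norm_eq, ← Real.sqrt_sq_eq_abs]
  apply Real.sqrt_le_sqrt
  have := Finset.single_le_sum (f := fun j => ‖x j‖^2)
    (fun j _ => sq_nonneg _) (Finset.mem_univ i)
  simpa [Real.norm_eq_abs, sq_abs] using this

lemma norm_ins_one_le (m : ℕ) (i : Fin (m+1)) (u : EuclideanSpace ℝ (Fin m)) :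
    1 ≤ ‖ins m i 1 u‖ := by
  have h := norm_ins_sq m i 1 u
  nlinarith [norm_nonneg (ins m i 1 u), norm_nonneg u, sq_nonneg ‖u‖]

lemma sphere_mem_T (m : ℕ) (ω : EuclideanSpace ℝ (Fin (m+1))) (hω : ‖ω‖ = 1)
    (i : Fin (m+1)) (hmax : ∀ j, |ω j| ≤ |ω i|) (hpos : 0 < ω i) :
    ω ∈ (fun u => ‖ins m i 1 u‖⁻¹ • ins m i 1 u) ''
      (Metric.closedBall (0 : EuclideanSpace ℝ (Fin m)) ((m:ℝ)+1)) := by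
  set v : EuclideanSpace ℝ (Fin m) := (WithLp.equiv 2 _).symm (fun j => ω (i.succAbove j)) with hv
  set u : EuclideanSpace ℝ (Fin m) := (ω i)⁻¹ • v with hu
  have hne : ω i ≠ 0 := ne_of_gt hpos
  have h1 : ins m i 1 u = (ω i)⁻¹ • ω := by
    apply (WithLp.equiv 2 (Fin (m+1) → ℝ)).injective
    funext j
    by_cases hj : j = i
    · subst hj
      have e1 : ins m j 1 u j = 1 := ins_apply_same m j 1 u
      have e2 : ((ω j)⁻¹ • ω) j = (ω j)⁻¹ * ω j := rfl
      show ins m j 1 u j = ((ω j)⁻¹ • ω) j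
      rw [e1, e2, inv_mul_cancel₀ hne]
    · obtain ⟨l, rfl⟩ := Fin.exists_succAbove_eq hj
      have e1 : ins m i 1 u (i.succAbove l) = u l := ins_apply_succAbove m i 1 u l
      have e2 : u l = (ω i)⁻¹ * ω (i.succAbove l) := rfl
      have e3 : ((ω i)⁻¹ • ω) (i.succAbove l) = (ω i)⁻¹ * ω (i.succAbove l) := rfl
      show ins m i 1 u (i.succAbove l) = ((ω i)⁻¹ • ω) (i.succAbove l)
      rw [e1, e2, e3]
  have hnorm : ‖ins m i 1 u‖ = (ω i)⁻¹ := by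
    rw [h1, norm_smul, hω, Real.norm_eq_abs, abs_inv, abs_of_pos hpos, mul_one]
  have himg : ‖ins m i 1 u‖⁻¹ • ins m i 1 u = ω := by
    rw [hnorm, h1, smul_smul, inv_inv, mul_inv_cancel₀ hne, one_smul]
  refine ⟨u, ?_, himg⟩
  -- u ∈ closedBall
  have habs : |ω i| = ω i := abs_of_pos hpos
  have hωi_le : ω i ≤ 1 := by
    have := coord_le_norm ω i
    rw [habs] at this; linarith [hω ▸ this]
  have hsum : (1:ℝ) ≤ ((m:ℝ)+1) * (ω i)^2 := by
    have hsq : ‖ω‖^2 = ∑ j : Fin (m+1), ‖ω j‖^2 := by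
      rw [EuclideanSpace.norm_eq, Real.sq_sqrt (by positivity)]
    have hb : ∀ j : Fin (m+1), ‖ω j‖^2 ≤ (ω i)^2 := by
      intro j
      rw [Real.norm_eq_abs, ← habs, sq_abs, sq_abs, ← sq_abs (ω j), ← sq_abs (ω i)]
      exact pow_le_pow_left₀ (abs_nonneg _) (hmax j) 2
    have : ∑ j : Fin (m+1), ‖ω j‖^2 ≤ ((m:ℝ)+1) * (ω i)^2 := by
      calc ∑ j : Fin (m+1), ‖ω j‖^2 ≤ ∑ _j : Fin (m+1), (ω i)^2 :=
            Finset.sum_le_sum (fun j _ => hb j)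
        _ = ((m:ℝ)+1) * (ω i)^2 := by
            rw [Finset.sum_const, Finset.card_univ, Fintype.card_fin, nsmul_eq_mul]
            push_cast; ring
    rw [hω] at hsq; nlinarith
  have hinv_le : (ω i)⁻¹ ≤ (m:ℝ)+1 := by
    have h2 : (1:ℝ) ≤ ((m:ℝ)+1) * ω i := by nlinarith
    calc (ω i)⁻¹ = (ω i)⁻¹ * 1 := by ring
      _ ≤ (ω i)⁻¹ * (((m:ℝ)+1) * ω i) := by
          exact mul_le_mul_of_nonneg_left h2 (le_of_lt (inv_pos.mpr hpos))
      _ = (m:ℝ)+1 := by field_simp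
  have hvnorm : ‖v‖ ≤ 1 := by
    have hsq : ‖ω‖^2 = ∑ j : Fin (m+1), ‖ω j‖^2 := by
      rw [EuclideanSpace.norm_eq, Real.sq_sqrt (by positivity)]
    have hvs : ‖v‖^2 = ∑ j : Fin m, ‖ω (i.succAbove j)‖^2 := by
      rw [EuclideanSpace.norm_eq, Real.sq_sqrt (by positivity)]
      exact Finset.sum_congr rfl fun j _ => rfl
    have hsplit : ∑ j : Fin (m+1), ‖ω j‖^2
        = ‖ω i‖^2 + ∑ j : Fin m, ‖ω (i.succAbove j)‖^2 :=
      Fin.sum_univ_succAbove (fun j => ‖ω j‖^2) i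
    have : ‖v‖^2 ≤ 1 := by
      rw [hvs]; rw [hω] at hsq; nlinarith [sq_nonneg ‖ω i‖]
    nlinarith [norm_nonneg v]
  rw [Metric.mem_closedBall, dist_zero_right, hu, norm_smul, Real.norm_eq_abs,
    abs_inv, habs]
  calc (ω i)⁻¹ * ‖v‖ ≤ (ω i)⁻¹ * 1 := by
        exact mul_le_mul_of_nonneg_left hvnorm (le_of_lt (inv_pos.mpr hpos))
    _ = (ω i)⁻¹ := mul_one _
    _ ≤ (m:ℝ)+1 := hinv_le

open scoped Pointwise in
lemma hm_sphere_lt_top (m : ℕ) :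
    μH[(m:ℝ)] (Metric.sphere (0 : EuclideanSpace ℝ (Fin (m+1))) 1) < ⊤ := by
  classical
  set T : Fin (m+1) → Set (EuclideanSpace ℝ (Fin (m+1))) :=
    fun i => (fun u => ‖ins m i 1 u‖⁻¹ • ins m i 1 u) ''
      (Metric.closedBall (0 : EuclideanSpace ℝ (Fin m)) ((m:ℝ)+1)) with hT
  have hTmeas : ∀ i, μH[(m:ℝ)] (T i) < ⊤ := by
    intro i
    have hmaps : Set.MapsTo (ins m i 1)
        (Metric.closedBall (0 : EuclideanSpace ℝ (Fin m)) ((m:ℝ)+1))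
        {x : EuclideanSpace ℝ (Fin (m+1)) | 1 ≤ ‖x‖} :=
      fun u _ => norm_ins_one_le m i u
    have hlip : LipschitzOnWith (2 * 1)
        ((fun x : EuclideanSpace ℝ (Fin (m+1)) => ‖x‖⁻¹ • x) ∘ (ins m i 1))
        (Metric.closedBall (0 : EuclideanSpace ℝ (Fin m)) ((m:ℝ)+1)) :=
      radial_lip.comp ((isometry_ins m i 1).lipschitz.lipschitzOnWith) hmaps
    have him := hlip.hausdorffMeasure_image_le (d := (m:ℝ)) (by positivity)
    refine lt_of_le_of_lt him ?_
    exact ENNReal.mul_lt_top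
      (ENNReal.rpow_lt_top_of_nonneg (by positivity) ENNReal.coe_ne_top)
      (hm_closedBall_lt_top m ((m:ℝ)+1))
  have hcover : Metric.sphere (0 : EuclideanSpace ℝ (Fin (m+1))) 1
      ⊆ (⋃ i, T i) ∪ (⋃ i, (-1:ℝ) • T i) := by
    intro ω hω
    have hnω : ‖ω‖ = 1 := by simpa [Metric.mem_sphere, dist_zero_right] using hω
    obtain ⟨i, -, hi⟩ := Finset.exists_max_image Finset.univ (fun j => |ω j|)
      ⟨0, Finset.mem_univ 0⟩
    have hmax : ∀ j, |ω j| ≤ |ω i| := fun j => hi j (Finset.mem_univ j)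
    have hne : ω i ≠ 0 := by
      intro h0
      have : ∀ j, ω j = 0 := by
        intro j
        have := hmax j
        rw [h0, abs_zero] at this
        exact abs_eq_zero.mp (le_antisymm this (abs_nonneg _))
      have : ω = 0 := by
        apply (WithLp.equiv 2 (Fin (m+1) → ℝ)).injective
        funext j; exact this j
      rw [this, norm_zero] at hnω; norm_num at hnω
    rcases lt_or_gt_of_ne hne with hneg | hpos
    · right
      refine Set.mem_iUnion.mpr ⟨i, ?_⟩
      rw [Set.mem_smul_set]
      refine ⟨-ω, ?_, by simp⟩
      have hn' : ‖-ω‖ = 1 := by rw [norm_neg]; exact hnω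
      have hmax' : ∀ j, |(-ω) j| ≤ |(-ω) i| := by
        intro j
        have e : ∀ l : Fin (m+1), (-ω) l = -(ω l) := fun l => rfl
        rw [e, e, abs_neg, abs_neg]; exact hmax j
      have hpos' : 0 < (-ω) i := by
        have e : (-ω) i = -(ω i) := rfl
        rw [e]; linarith
      exact sphere_mem_T m (-ω) hn' i hmax' hpos'
    · left
      exact Set.mem_iUnion.mpr ⟨i, sphere_mem_T m ω hnω i hmax hpos⟩
  refine lt_of_le_of_lt (measure_mono hcover) ?_
  refine lt_of_le_of_lt (measure_union_le _ _) ?_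
  have h1 : μH[(m:ℝ)] (⋃ i, T i) < ⊤ := by
    refine lt_of_le_of_lt (measure_iUnion_fintype_le _ _) ?_
    exact ENNReal.sum_lt_top.mpr (fun i _ => hTmeas i)
  have h2 : μH[(m:ℝ)] (⋃ i, (-1:ℝ) • T i) < ⊤ := by
    refine lt_of_le_of_lt (measure_iUnion_fintype_le _ _) ?_
    refine ENNReal.sum_lt_top.mpr (fun i _ => ?_)
    rw [MeasureTheory.Measure.hausdorffMeasure_smul₀ (by positivity) (by norm_num) (T i)]
    simpa using hTmeas i
  exact ENNReal.add_lt_top.mpr ⟨h1, h2⟩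

lemma sphere_hm_pos_lt_top (n : ℕ) (hn : 1 ≤ n) :
    0 < μH[(n:ℝ)-1] (Metric.sphere (0 : EuclideanSpace ℝ (Fin n)) 1) ∧
    μH[(n:ℝ)-1] (Metric.sphere (0 : EuclideanSpace ℝ (Fin n)) 1) < ⊤ := by
  obtain ⟨m, rfl⟩ : ∃ m, n = m + 1 := ⟨n - 1, (Nat.succ_pred_eq_of_pos hn).symm⟩
  have hcast : ((m+1:ℕ):ℝ) - 1 = (m:ℝ) := by push_cast; ring
  rw [hcast]
  exact ⟨hm_sphere_pos m, hm_sphere_lt_top m⟩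

lemma YZ_props (n : ℕ) (hn : 1 ≤ n) :
    ∃ c : ℝ, 0 < c ∧ Continuous (YZphi n) ∧
      (∀ y, 0 ≤ YZphi n y) ∧ (∀ y, c * Real.exp (-‖y‖) ≤ YZphi n y) := by
  by_cases h1 : n = 1
  · refine ⟨1, one_pos, ?_, ?_, ?_⟩
    · have : YZphi n = fun y => Real.cosh ‖y‖ := by
        funext y; rw [YZphi, if_pos h1]
      rw [this]
      exact Real.continuous_cosh.comp continuous_norm
    · intro y; rw [YZphi, if_pos h1]
      positivity
    · intro y; rw [YZphi, if_pos h1, one_mul, Real.cosh_eq]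
      have h2 : Real.exp (-‖y‖) ≤ Real.exp ‖y‖ :=
        Real.exp_le_exp.mpr (by linarith [norm_nonneg y])
      linarith
  · set σ : Measure (EuclideanSpace ℝ (Fin n)) :=
      (μH[(n:ℝ)-1]).restrict (Metric.sphere (0 : EuclideanSpace ℝ (Fin n)) 1) with hσ
    obtain ⟨hpos, hfin⟩ := sphere_hm_pos_lt_top n hn
    have hσuniv : σ Set.univ
        = μH[(n:ℝ)-1] (Metric.sphere (0 : EuclideanSpace ℝ (Fin n)) 1) := by
      rw [hσ, Measure.restrict_apply_univ]
    haveI : IsFiniteMeasure σ := ⟨by rw [hσuniv]; exact hfin⟩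
    have hae : ∀ᵐ ω ∂σ, ω ∈ Metric.sphere (0 : EuclideanSpace ℝ (Fin n)) 1 :=
      ae_restrict_mem Metric.isClosed_sphere.measurableSet
    have hcont_int : ∀ y : EuclideanSpace ℝ (Fin n),
        Continuous fun ω : EuclideanSpace ℝ (Fin n) => Real.exp ((inner ℝ y ω : ℝ)) := fun y =>
      Real.continuous_exp.comp (Continuous.inner continuous_const continuous_id)
    have hinteg : ∀ y : EuclideanSpace ℝ (Fin n),
        Integrable (fun ω => Real.exp ((inner ℝ y ω : ℝ))) σ := by
      intro y
      refine (integrable_const (Real.exp ‖y‖)).mono' ((hcont_int y).aestronglyMeasurable) ?_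
      filter_upwards [hae] with ω hω
      have hω1 : ‖ω‖ = 1 := by rwa [mem_sphere_zero_iff_norm] at hω
      rw [Real.norm_eq_abs, abs_of_pos (Real.exp_pos _), Real.exp_le_exp]
      calc (inner ℝ y ω : ℝ) ≤ ‖y‖ * ‖ω‖ := real_inner_le_norm y ω
        _ = ‖y‖ := by rw [hω1, mul_one]
    have hYZeq : YZphi n = fun y => ∫ ω, Real.exp ((inner ℝ y ω : ℝ)) ∂σ := by
      funext y; rw [YZphi, if_neg h1]
    refine ⟨(σ Set.univ).toReal, ?_, ?_, ?_, ?_⟩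
    · exact ENNReal.toReal_pos (by rw [hσuniv]; exact ne_of_gt hpos)
        (by rw [hσuniv]; exact ne_of_lt hfin)
    · rw [hYZeq]
      refine continuous_iff_continuousAt.mpr fun y₀ => ?_
      apply MeasureTheory.continuousAt_of_dominated
        (bound := fun _ => Real.exp (‖y₀‖ + 1))
      · exact Filter.Eventually.of_forall fun y => (hcont_int y).aestronglyMeasurable
      · filter_upwards [Metric.ball_mem_nhds y₀ one_pos] with y hy
        filter_upwards [hae] with ω hω
        have hω1 : ‖ω‖ = 1 := by rwa [mem_sphere_zero_iff_norm] at hω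
        have hyn : ‖y‖ ≤ ‖y₀‖ + 1 := by
          have hd : ‖y - y₀‖ < 1 := by
            rw [← dist_eq_norm]; exact Metric.mem_ball.mp hy
          calc ‖y‖ = ‖y₀ + (y - y₀)‖ := by congr 1; abel
            _ ≤ ‖y₀‖ + ‖y - y₀‖ := norm_add_le _ _
            _ ≤ ‖y₀‖ + 1 := by linarith
        rw [Real.norm_eq_abs, abs_of_pos (Real.exp_pos _), Real.exp_le_exp]
        calc (inner ℝ y ω : ℝ) ≤ ‖y‖ * ‖ω‖ := real_inner_le_norm y ω
          _ = ‖y‖ := by rw [hω1, mul_one]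
          _ ≤ ‖y₀‖ + 1 := hyn
      · exact integrable_const _
      · refine Filter.Eventually.of_forall fun ω => ?_
        exact (Real.continuous_exp.comp
          (Continuous.inner continuous_id continuous_const)).continuousAt
    · intro y
      rw [hYZeq]
      exact integral_nonneg fun ω => (Real.exp_pos _).le
    · intro y
      rw [hYZeq]
      have h3 : ∫ _ω, Real.exp (-‖y‖) ∂σ ≤ ∫ ω, Real.exp ((inner ℝ y ω : ℝ)) ∂σ := by
        refine integral_mono_ae (integrable_const _) (hinteg y) ?_
        filter_upwards [hae] with ω hω
        have hω1 : ‖ω‖ = 1 := by rwa [mem_sphere_zero_iff_norm] at hω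
        rw [Real.exp_le_exp]
        have habs : |(inner ℝ y ω : ℝ)| ≤ ‖y‖ := by
          calc |(inner ℝ y ω : ℝ)| ≤ ‖y‖ * ‖ω‖ := abs_real_inner_le_norm y ω
            _ = ‖y‖ := by rw [hω1, mul_one]
        linarith [neg_abs_le ((inner ℝ y ω : ℝ))]
      rw [integral_const, smul_eq_mul] at h3
      exact h3

lemma phik_mono (k : ℝ) (hk : k ∈ Set.Ico (0:ℝ) 1) {s t : ℝ} (hs : 0 ≤ s) (hst : s ≤ t) :
    phik k s ≤ phik k t := by
  have h1k : 0 < 1 - k := by linarith [hk.2]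
  unfold phik
  gcongr

lemma Ak_nonneg (k : ℝ) (hk : k ∈ Set.Ico (0:ℝ) 1) {s : ℝ} (hs : 1 ≤ s) : 0 ≤ Ak k s := by
  have := phik_mono k hk (s := 1) (t := s) zero_le_one hs
  unfold Ak; linarith

lemma cosh_ge_exp_half (z : ℝ) : Real.exp z / 2 ≤ Real.cosh z := by
  rw [Real.cosh_eq]
  have := Real.exp_pos (-z)
  linarith

/-- Lower bound for the auxiliary function `ξ_q`. -/
theorem xiq_lower_bound
    (n : ℕ) (hn : 1 ≤ n) (k : ℝ) (hk : k ∈ Set.Ico (0:ℝ) 1)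
    (lam0 : ℝ) (hlam0 : 0 < lam0) (R : ℝ) (hR : 0 < R)
    (q : ℝ) (hq : -1 < q) :
    ∃ B₀ > (0:ℝ), ∀ s t : ℝ, 1 ≤ s → s ≤ t →
      ∀ x : EuclideanSpace ℝ (Fin n), ‖x‖ ≤ Ak k s + R →
        B₀ * (3 + |Ak k s|) ^ (-q - 1) ≤ xiq n lam0 R k q t s x := by
  classical
  obtain ⟨c, hc, hcont, hYZnn, hYZlb⟩ := YZ_props n hn
  obtain ⟨c0, hc0def⟩ : ∃ y : ℝ, y = min lam0 1 := ⟨_, rfl⟩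
  have hc0 : 0 < c0 := by rw [hc0def]; exact lt_min hlam0 one_pos
  have hc0le : c0 ≤ lam0 := by rw [hc0def]; exact min_le_left _ _
  obtain ⟨M1, hM1def⟩ : ∃ y : ℝ, y = max R 1 := ⟨_, rfl⟩
  have hM11 : (1:ℝ) ≤ M1 := by rw [hM1def]; exact le_max_right _ _
  have hM1R : R ≤ M1 := by rw [hM1def]; exact le_max_left _ _
  obtain ⟨D, hDdef⟩ : ∃ y : ℝ, y = c / 2 * Real.exp (-(2 * c0 * M1)) := ⟨_, rfl⟩
  have hD : 0 < D := by rw [hDdef]; exact mul_pos (by linarith) (Real.exp_pos _)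
  have hq1 : 0 < q + 1 := by linarith
  have hc0q : 0 < c0 ^ (q+1) := Real.rpow_pos_of_pos hc0 _
  refine ⟨D * c0 ^ (q+1) / (q+1), div_pos (mul_pos hD hc0q) hq1, ?_⟩
  intro s t hs hst x hx
  have hs0 : (0:ℝ) ≤ s := by linarith
  have hA0 : 0 ≤ Ak k s := Ak_nonneg k hk hs
  have habs : |Ak k s| = Ak k s := abs_of_nonneg hA0
  have h3A : (0:ℝ) < 3 + Ak k s := by linarith
  obtain ⟨c1, hc1def⟩ : ∃ y : ℝ, y = c0 / (3 + Ak k s) := ⟨_, rfl⟩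
  have hc1 : 0 < c1 := by rw [hc1def]; exact div_pos hc0 h3A
  have hc1le : c1 ≤ lam0 := by
    calc c1 = c0 / (3 + Ak k s) := hc1def
      _ ≤ c0 := div_le_self (le_of_lt hc0) (by linarith)
      _ ≤ lam0 := hc0le
  obtain ⟨F, hFdef⟩ : ∃ F : ℝ → ℝ, F = fun lam => Real.exp (-(lam * (Ak k t + R))) *
      Real.cosh (lam * (phik k t - phik k s)) * YZphi n (lam • x) := ⟨_, rfl⟩
  have hFcont : Continuous F := by
    rw [hFdef]
    apply Continuous.mul
    · apply Continuous.mul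
      · exact Real.continuous_exp.comp (by continuity)
      · exact Real.continuous_cosh.comp (by continuity)
    · exact hcont.comp (continuous_id.smul continuous_const)
  have hgint : ∀ a b : ℝ, IntervalIntegrable (fun lam => F lam * lam ^ q) volume a b :=
    fun a b => (intervalIntegral.intervalIntegrable_rpow' hq).continuousOn_mul
      hFcont.continuousOn
  have hxiq : xiq n lam0 R k q t s x = ∫ lam in (0:ℝ)..lam0, F lam * lam ^ q := by
    rw [hFdef]; rfl
  have hgnn : ∀ lam : ℝ, 0 ≤ lam → 0 ≤ F lam * lam ^ q := by
    intro lam hlam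
    apply mul_nonneg _ (Real.rpow_nonneg hlam q)
    rw [hFdef]
    exact mul_nonneg (mul_nonneg (le_of_lt (Real.exp_pos _))
      (le_of_lt (Real.cosh_pos _))) (hYZnn _)
  have hpt : ∀ lam ∈ Set.Icc (0:ℝ) c1, D * lam ^ q ≤ F lam * lam ^ q := by
    intro lam hlam
    obtain ⟨hlamnn, hlamc1⟩ := hlam
    apply mul_le_mul_of_nonneg_right _ (Real.rpow_nonneg hlamnn q)
    have hexp3 : Real.exp (-(lam * (Ak k t + R))) *
        Real.exp (lam * (phik k t - phik k s)) = Real.exp (-(lam * (Ak k s + R))) := by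
      rw [← Real.exp_add]
      congr 1
      unfold Ak
      ring
    have h1 : Real.exp (-(lam * (Ak k s + R))) / 2
        ≤ Real.exp (-(lam * (Ak k t + R))) * Real.cosh (lam * (phik k t - phik k s)) := by
      have h2 := cosh_ge_exp_half (lam * (phik k t - phik k s))
      nlinarith [Real.exp_pos (-(lam * (Ak k t + R))),
        mul_le_mul_of_nonneg_left h2 (le_of_lt (Real.exp_pos (-(lam * (Ak k t + R)))))]
    have h4 : c * Real.exp (-(lam * (Ak k s + R))) ≤ YZphi n (lam • x) := by
      have h5 := hYZlb (lam • x)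
      have h6 : ‖lam • x‖ = lam * ‖x‖ := by
        rw [norm_smul, Real.norm_eq_abs, abs_of_nonneg hlamnn]
      have h7 : Real.exp (-(lam * (Ak k s + R))) ≤ Real.exp (-‖lam • x‖) := by
        rw [Real.exp_le_exp, h6, neg_le_neg_iff]
        exact mul_le_mul_of_nonneg_left hx hlamnn
      calc c * Real.exp (-(lam * (Ak k s + R))) ≤ c * Real.exp (-‖lam • x‖) :=
            mul_le_mul_of_nonneg_left h7 (le_of_lt hc)
        _ ≤ YZphi n (lam • x) := h5
    have h8 : lam * (Ak k s + R) ≤ c0 * M1 := by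
      have h9 : lam * (3 + Ak k s) ≤ c0 := by
        rw [hc1def] at hlamc1
        rw [← le_div_iff₀ h3A]
        exact hlamc1
      nlinarith [mul_le_mul_of_nonneg_right h9 (by linarith : (0:ℝ) ≤ M1),
        mul_nonneg hlamnn (by linarith : (0:ℝ) ≤ M1 - 1)]
    calc D = c / 2 * Real.exp (-(2 * c0 * M1)) := hDdef
      _ ≤ c / 2 * Real.exp (-(lam * (Ak k s + R)) + -(lam * (Ak k s + R))) := by
          apply mul_le_mul_of_nonneg_left _ (by linarith : (0:ℝ) ≤ c / 2)
          rw [Real.exp_le_exp]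
          linarith
      _ = Real.exp (-(lam * (Ak k s + R))) / 2 * (c * Real.exp (-(lam * (Ak k s + R)))) := by
          rw [Real.exp_add]
          ring
      _ ≤ (Real.exp (-(lam * (Ak k t + R))) * Real.cosh (lam * (phik k t - phik k s)))
            * YZphi n (lam • x) := by
          apply mul_le_mul h1 h4
          · exact mul_nonneg (le_of_lt hc) (le_of_lt (Real.exp_pos _))
          · exact mul_nonneg (le_of_lt (Real.exp_pos _)) (le_of_lt (Real.cosh_pos _))
      _ = F lam := by rw [hFdef]
  have hsplit : ∫ lam in (0:ℝ)..lam0, F lam * lam ^ q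
      = (∫ lam in (0:ℝ)..c1, F lam * lam ^ q) + ∫ lam in c1..lam0, F lam * lam ^ q :=
    (intervalIntegral.integral_add_adjacent_intervals (hgint 0 c1) (hgint c1 lam0)).symm
  have htail : 0 ≤ ∫ lam in c1..lam0, F lam * lam ^ q := by
    apply intervalIntegral.integral_nonneg hc1le
    intro u hu
    exact hgnn u (le_trans (le_of_lt hc1) hu.1)
  have hDint : IntervalIntegrable (fun lam : ℝ => D * lam ^ q) volume 0 c1 :=
    (intervalIntegral.intervalIntegrable_rpow' (a := 0) (b := c1) hq).const_mul D
  have hmain : ∫ lam in (0:ℝ)..c1, D * lam ^ q ≤ ∫ lam in (0:ℝ)..c1, F lam * lam ^ q :=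
    intervalIntegral.integral_mono_on (le_of_lt hc1) hDint (hgint 0 c1) hpt
  have hcomp : ∫ lam in (0:ℝ)..c1, D * lam ^ q = D * (c1 ^ (q+1) / (q+1)) := by
    rw [intervalIntegral.integral_const_mul, integral_rpow (Or.inl hq),
      Real.zero_rpow (by linarith : q + 1 ≠ 0)]
    ring
  have hfinal : D * c0 ^ (q+1) / (q+1) * (3 + |Ak k s|) ^ (-q-1) = D * (c1 ^ (q+1) / (q+1)) := by
    rw [habs]
    have h10 : c1 ^ (q+1) = c0 ^ (q+1) / (3 + Ak k s) ^ (q+1) := by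
      rw [hc1def]
      exact Real.div_rpow (le_of_lt hc0) (le_of_lt h3A) (q+1)
    have h11 : (3 + Ak k s) ^ (-q-1) = ((3 + Ak k s) ^ (q+1))⁻¹ := by
      rw [show -q-1 = -(q+1) by ring, Real.rpow_neg (le_of_lt h3A)]
    have h12 : (0:ℝ) < (3 + Ak k s) ^ (q+1) := Real.rpow_pos_of_pos h3A _
    rw [h10, h11]
    ring
  calc D * c0 ^ (q+1) / (q+1) * (3 + |Ak k s|) ^ (-q-1)
      = D * (c1 ^ (q+1) / (q+1)) := hfinal
    _ = ∫ lam in (0:ℝ)..c1, D * lam ^ q := hcomp.symm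
    _ ≤ ∫ lam in (0:ℝ)..c1, F lam * lam ^ q := hmain
    _ ≤ ∫ lam in (0:ℝ)..lam0, F lam * lam ^ q := by rw [hsplit]; linarith
    _ = xiq n lam0 R k q t s x := hxiq.symm
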